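/- Let σ^t : H → H[[t]] be the unique ℚ-algebra homomorphism with σ^t(e_i) = e_i·(1+e₀t)^{−1} = ∑_{n≥0} e_i e₀^n (−t)^n for i ∈ {0,1}. Then σ^t maps H¹ into H¹[[t]] (i.e. every coefficient of σ^t(u) lies in H¹ for u ∈ H¹), and for all u, v ∈ H¹ one has σ^t(u * v) = σ^t(u) * σ^t(v), where the harmonic product on H¹[[t]] is extended coefficientwise: (∑_m w_m t^m) * (∑_n w'_n t^n) = ∑_{m,n} (w_m * w'_n) t^{m+n}. -/

import Mathlib

/- STATEMENT 0: the substitution σ^t(e_i) = e_i(1+e₀t)⁻¹ maps H¹ into H¹[[t]] and is a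
homomorphism for the harmonic product, extended coefficientwise (Cauchy product). -/

noncomputable section

abbrev H : Type := FreeAlgebra ℚ (Fin 2)

def e0 : H := FreeAlgebra.ι ℚ 0
def e1 : H := FreeAlgebra.ι ℚ 1

/-- `e_{(m)} = e₁ e₀^{m-1}`. -/
def eE (m : ℕ+) : H := e1 * e0 ^ ((m : ℕ) - 1)

/-- `e_k` for an index `k`. -/
def eIdx : List ℕ+ → H
  | [] => 1
  | m :: ks => eE m * eIdx ks

/-- `H¹`, the span of the `e_k`. -/
def H1 : Submodule ℚ H := Submodule.span ℚ (Set.range eIdx)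

/-- The unique ℚ-algebra homomorphism `H → H[[t]]` with
`σ^t(e_i) = e_i (1+e₀t)⁻¹ = ∑_{n≥0} e_i e₀ⁿ (-t)ⁿ`. -/
def sigmaT : H →ₐ[ℚ] PowerSeries H :=
  FreeAlgebra.lift ℚ (fun i : Fin 2 =>
    PowerSeries.mk fun n => (-1 : H) ^ n * (FreeAlgebra.ι ℚ i * e0 ^ n))

open PowerSeries Finset

/-! ### Generic sum-reindexing lemmas -/

lemma sum_ad_swap (n : ℕ) {M : Type} [AddCommMonoid M] (f : ℕ → ℕ → M) :
    ∑ p ∈ antidiagonal n, f p.1 p.2 = ∑ p ∈ antidiagonal n, f p.2 p.1 := by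
  conv_lhs => rw [← Finset.HasAntidiagonal.map_swap_antidiagonal]
  rw [Finset.sum_map]
  rfl

lemma L3 {M : Type} [AddCommMonoid M] (n : ℕ) (f : ℕ → ℕ → ℕ → M) :
    ∑ p ∈ antidiagonal n, ∑ q ∈ antidiagonal p.2, f p.1 q.1 q.2
      = ∑ p ∈ antidiagonal n, ∑ q ∈ antidiagonal p.1, f q.1 q.2 p.2 := by
  rw [Finset.sum_sigma', Finset.sum_sigma']
  refine Finset.sum_nbij' (fun x => ⟨(x.1.1 + x.2.1, x.2.2), (x.1.1, x.2.1)⟩)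
    (fun x => ⟨(x.2.1, x.2.2 + x.1.2), (x.2.2, x.1.2)⟩) ?_ ?_ ?_ ?_ ?_
  · rintro ⟨⟨m, s⟩, i, j⟩ ha
    simp only [Finset.mem_sigma, Finset.HasAntidiagonal.mem_antidiagonal] at ha ⊢
    exact ⟨by omega, trivial⟩
  · rintro ⟨⟨m, s⟩, i, j⟩ ha
    simp only [Finset.mem_sigma, Finset.HasAntidiagonal.mem_antidiagonal] at ha ⊢
    exact ⟨by omega, trivial⟩
  · rintro ⟨⟨m, s⟩, i, j⟩ ha
    simp only [Finset.mem_sigma, Finset.HasAntidiagonal.mem_antidiagonal] at ha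
    obtain ⟨-, h2⟩ := ha
    simp only at h2 ⊢
    subst h2
    rfl
  · rintro ⟨⟨m, s⟩, i, j⟩ ha
    simp only [Finset.mem_sigma, Finset.HasAntidiagonal.mem_antidiagonal] at ha
    obtain ⟨-, h2⟩ := ha
    simp only at h2 ⊢
    subst h2
    rfl
  · intro a _
    rfl

/-! ### The scalar coefficients `cc d n` of `(1+t)^{-(d+1)}` -/

def cc (d n : ℕ) : ℚ := (-1 : ℚ) ^ n * ((d + n).choose n : ℚ)

def Cser (d : ℕ) : PowerSeries ℚ := PowerSeries.mk (cc d)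

lemma Cser_mul (d : ℕ) : Cser d * (1 + X) ^ (d + 1) = 1 := by
  induction d with
  | zero =>
    ext n
    rw [pow_one, mul_add, mul_one]
    cases n with
    | zero => simp [Cser, cc]
    | succ n =>
      rw [map_add, coeff_succ_mul_X]
      simp [Cser, cc, coeff_one, pow_succ]
  | succ d ih =>
    have key : Cser (d + 1) * (1 + X) = Cser d := by
      ext n
      rw [mul_add, mul_one, map_add]
      cases n with
      | zero => simp [Cser, cc]
      | succ n =>
        rw [coeff_succ_mul_X]
        simp only [Cser, cc, coeff_mk]
        have h : (d + 1 + (n + 1)).choose (n + 1)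
            = (d + 1 + n).choose n + (d + 1 + n).choose (n+1) := by
          have h0 : d + 1 + (n+1) = (d+1+n) + 1 := by omega
          rw [h0, Nat.choose_succ_succ]
        have h2 : d + (n+1) = d + 1 + n := by omega
        rw [h, h2]
        push_cast
        ring
    calc Cser (d + 1) * (1 + X) ^ (d + 1 + 1)
        = (Cser (d + 1) * (1 + X)) * (1 + X) ^ (d + 1) := by ring
      _ = 1 := by rw [key, ih]

lemma Cser_conv (d e n : ℕ) :
    ∑ p ∈ antidiagonal n, cc d p.1 * cc e p.2 = cc (d + e + 1) n := by
  have hne : ((1 : PowerSeries ℚ) + X) ^ (d + e + 1 + 1) ≠ 0 := by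
    apply pow_ne_zero
    intro h
    have := congrArg (constantCoeff (R := ℚ)) h
    simp at this
  have hser : Cser d * Cser e = Cser (d + e + 1) := by
    apply mul_right_cancel₀ hne
    calc Cser d * Cser e * (1 + X) ^ (d + e + 1 + 1)
        = (Cser d * (1+X)^(d+1)) * (Cser e * (1+X)^(e+1)) := by ring
      _ = 1 := by rw [Cser_mul, Cser_mul, one_mul]
      _ = Cser (d + e + 1) * (1+X)^(d+e+1+1) := (Cser_mul _).symm
  have h := congrArg (PowerSeries.coeff (R := ℚ) n) hser
  rw [coeff_mul] at h
  simpa [Cser] using h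

/-! ### `EE`, `A`, and the computation of `σ` on them -/

/-- `EE d = e₁ e₀^d`. -/
def EE (d : ℕ) : H := e1 * e0 ^ d

/-- `A d = σ(EE d) = ∑_n cc d n • EE (d+n) tⁿ`. -/
def A (d : ℕ) : PowerSeries H := PowerSeries.mk fun n => cc d n • EE (d + n)

lemma eE_eq_EE (m : ℕ+) : eE m = EE ((m : ℕ) - 1) := rfl

lemma EE_eq_eE (d : ℕ) : EE d = eE ⟨d + 1, Nat.succ_pos d⟩ := rfl

lemma neg_one_pow_smul (n : ℕ) (x : H) : (-1 : H) ^ n * x = ((-1 : ℚ) ^ n) • x := by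
  rcases Nat.even_or_odd n with h | h
  · rw [h.neg_one_pow, h.neg_one_pow, one_mul, one_smul]
  · rw [h.neg_one_pow, h.neg_one_pow, neg_one_mul, neg_one_smul]

lemma sigma_e0 : sigmaT e0 = PowerSeries.mk fun n => ((-1 : ℚ)) ^ n • e0 ^ (n + 1) := by
  rw [sigmaT, e0, FreeAlgebra.lift_ι_apply]
  ext n
  rw [coeff_mk, coeff_mk, neg_one_pow_smul]
  congr 1
  rw [← e0, pow_succ']

lemma sigma_e1 : sigmaT e1 = PowerSeries.mk fun n => ((-1 : ℚ)) ^ n • (e1 * e0 ^ n) := by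
  rw [sigmaT, e1, FreeAlgebra.lift_ι_apply]
  ext n
  rw [coeff_mk, coeff_mk, neg_one_pow_smul]

lemma sigma_EE (d : ℕ) : sigmaT (EE d) = A d := by
  induction d with
  | zero =>
    ext n
    rw [EE, pow_zero, mul_one, sigma_e1]
    simp [A, cc, EE]
  | succ d ih =>
    have hE : EE (d+1) = EE d * e0 := by rw [EE, EE, pow_succ, mul_assoc]
    rw [hE, map_mul, ih, sigma_e0]
    ext n
    rw [coeff_mul]
    have hterm : ∀ p ∈ antidiagonal n,
        (PowerSeries.coeff (R := H) p.1 (A d)) *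
          (PowerSeries.coeff (R := H) p.2 (PowerSeries.mk fun n => ((-1:ℚ))^n • e0 ^ (n+1)))
        = (cc d p.1 * cc 0 p.2) • EE (d + 1 + n) := by
      rintro ⟨p, q⟩ h
      rw [Finset.HasAntidiagonal.mem_antidiagonal] at h
      rw [A, coeff_mk, coeff_mk, smul_mul_smul_comm]
      congr 1
      · simp [cc]
      · rw [EE, EE, mul_assoc, ← pow_add]
        congr 2
        omega
    rw [Finset.sum_congr rfl hterm, ← Finset.sum_smul, A, coeff_mk]
    congr 1
    simpa using Cser_conv d 0 n

lemma sigma_eE (m : ℕ+) : sigmaT (eE m) = A ((m : ℕ) - 1) := by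
  rw [eE_eq_EE, sigma_EE]

/-! ### Basic facts about `eIdx`, `H1` -/

lemma eIdx_concat (k : List ℕ+) (m : ℕ+) : eIdx (k ++ [m]) = eIdx k * eE m := by
  induction k with
  | nil => simp [eIdx]
  | cons a k ih => simp [eIdx, ih, mul_assoc]

lemma eIdx_mem (k : List ℕ+) : eIdx k ∈ H1 :=
  Submodule.subset_span ⟨k, rfl⟩

lemma H1_lmul (d : ℕ) {x : H} (hx : x ∈ H1) : EE d * x ∈ H1 := by
  induction hx using Submodule.span_induction with
  | mem x h =>
    obtain ⟨k, rfl⟩ := h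
    rw [EE_eq_eE]
    exact eIdx_mem (⟨d + 1, Nat.succ_pos d⟩ :: k)
  | zero => simp
  | add x y _ _ hx hy => rw [mul_add]; exact add_mem hx hy
  | smul a x _ hx => rw [mul_smul_comm]; exact Submodule.smul_mem _ _ hx

lemma coeff_sigma_eIdx_mem (ks : List ℕ+) (n : ℕ) :
    PowerSeries.coeff (R := H) n (sigmaT (eIdx ks)) ∈ H1 := by
  induction ks generalizing n with
  | nil =>
    show PowerSeries.coeff (R := H) n (sigmaT 1) ∈ H1
    rw [map_one]
    rcases Nat.eq_zero_or_pos n with rfl | hn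
    · simpa [eIdx] using eIdx_mem []
    · rw [PowerSeries.coeff_one, if_neg (by omega)]
      exact zero_mem _
  | cons m ks ih =>
    show PowerSeries.coeff (R := H) n (sigmaT (eE m * eIdx ks)) ∈ H1
    rw [map_mul, sigma_eE, coeff_mul]
    refine sum_mem fun p _ => ?_
    rw [A, coeff_mk, smul_mul_assoc]
    exact Submodule.smul_mem _ _ (H1_lmul _ (ih p.2))

/-! ### The tensor square and the lifted harmonic product -/

abbrev HW : Type := TensorProduct ℚ H H

def mL : PowerSeries H →+* PowerSeries HW :=
  PowerSeries.map ((Algebra.TensorProduct.includeLeft : H →ₐ[ℚ] HW).toRingHom)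

def mR : PowerSeries H →+* PowerSeries HW :=
  PowerSeries.map ((Algebra.TensorProduct.includeRight : H →ₐ[ℚ] HW).toRingHom)

def PP : Submodule ℚ HW :=
  Submodule.span ℚ {w | ∃ k l : List ℕ+, eIdx k ⊗ₜ[ℚ] eIdx l = w}

lemma coeff_mL (F : PowerSeries H) (n : ℕ) :
    PowerSeries.coeff (R := HW) n (mL F) = (PowerSeries.coeff (R := H) n F) ⊗ₜ[ℚ] 1 := by
  rw [mL, coeff_map]
  rfl

lemma coeff_mR (F : PowerSeries H) (n : ℕ) :
    PowerSeries.coeff (R := HW) n (mR F) = (1 : H) ⊗ₜ[ℚ] (PowerSeries.coeff (R := H) n F) := by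
  rw [mR, coeff_map]
  rfl

lemma coeff_mLA (d n : ℕ) :
    PowerSeries.coeff (R := HW) n (mL (A d)) = cc d n • (EE (d + n) ⊗ₜ[ℚ] (1 : H)) := by
  rw [coeff_mL, A, coeff_mk, TensorProduct.smul_tmul']

lemma coeff_mRA (d n : ℕ) :
    PowerSeries.coeff (R := HW) n (mR (A d)) = cc d n • ((1 : H) ⊗ₜ[ℚ] EE (d + n)) := by
  rw [coeff_mR, A, coeff_mk, TensorProduct.tmul_smul]

lemma LRcomm (F G : PowerSeries H) : mL F * mR G = mR G * mL F := by
  ext n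
  rw [coeff_mul, coeff_mul, sum_ad_swap n
    (fun p q => PowerSeries.coeff (R := HW) p (mR G) * PowerSeries.coeff (R := HW) q (mL F))]
  refine Finset.sum_congr rfl fun p _ => ?_
  rw [coeff_mL, coeff_mR, Algebra.TensorProduct.tmul_mul_tmul,
    Algebra.TensorProduct.tmul_mul_tmul, one_mul, mul_one, one_mul, mul_one]

lemma tmul_mem_PP {x y : H} (hx : x ∈ H1) (hy : y ∈ H1) : x ⊗ₜ[ℚ] y ∈ PP := by
  induction hx using Submodule.span_induction with
  | mem x h =>
    obtain ⟨k, rfl⟩ := h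
    induction hy using Submodule.span_induction with
    | mem y h' =>
      obtain ⟨l, rfl⟩ := h'
      exact Submodule.subset_span ⟨k, l, rfl⟩
    | zero => rw [TensorProduct.tmul_zero]; exact zero_mem _
    | add y z _ _ hy hz => rw [TensorProduct.tmul_add]; exact add_mem hy hz
    | smul a y _ hy => rw [TensorProduct.tmul_smul]; exact Submodule.smul_mem _ _ hy
  | zero => rw [TensorProduct.zero_tmul]; exact zero_mem _
  | add x z _ _ hx hz => rw [TensorProduct.add_tmul]; exact add_mem hx hz
  | smul a x _ hx => rw [← TensorProduct.smul_tmul', ] ; exact Submodule.smul_mem _ _ hx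

lemma coeff_mLmR_mem {F G : PowerSeries H}
    (hF : ∀ n, PowerSeries.coeff (R := H) n F ∈ H1) (hG : ∀ n, PowerSeries.coeff (R := H) n G ∈ H1)
    (m : ℕ) : PowerSeries.coeff (R := HW) m (mL F * mR G) ∈ PP := by
  rw [coeff_mul]
  refine sum_mem fun p _ => ?_
  rw [coeff_mL, coeff_mR, Algebra.TensorProduct.tmul_mul_tmul, one_mul, mul_one]
  exact tmul_mem_PP (hF p.1) (hG p.2)

/-! ### Extending the hypotheses by linearity -/

section Mul

variable (mul : H →ₗ[ℚ] H →ₗ[ℚ] H)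

lemma honeL' (hOneL : ∀ l : List ℕ+, mul (eIdx []) (eIdx l) = eIdx l)
    {x : H} (hx : x ∈ H1) : mul (eIdx []) x = x := by
  induction hx using Submodule.span_induction with
  | mem x h => obtain ⟨l, rfl⟩ := h; exact hOneL l
  | zero => simp
  | add x y _ _ hx hy => rw [map_add, hx, hy]
  | smul a x _ hx => rw [map_smul, hx]

lemma honeR' (hOneR : ∀ k : List ℕ+, mul (eIdx k) (eIdx []) = eIdx k)
    {x : H} (hx : x ∈ H1) : mul x (eIdx []) = x := by
  induction hx using Submodule.span_induction with
  | mem x h => obtain ⟨l, rfl⟩ := h; exact hOneR l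
  | zero => simp
  | add x y _ _ hx hy =>
    rw [map_add, LinearMap.add_apply, hx, hy]
  | smul a x _ hx => rw [map_smul, LinearMap.smul_apply, hx]

lemma recW (hRec : ∀ (k l : List ℕ+) (a b : ℕ+),
      mul (eIdx (k ++ [a])) (eIdx (l ++ [b])) =
        mul (eIdx (k ++ [a])) (eIdx l) * eE b
        + mul (eIdx k) (eIdx (l ++ [b])) * eE a
        - mul (eIdx k) (eIdx l) * eE (a + b))
    {w : HW} (hw : w ∈ PP) (i j : ℕ) :
    TensorProduct.lift mul (w * (EE i ⊗ₜ[ℚ] EE j))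
      = TensorProduct.lift mul (w * (EE i ⊗ₜ[ℚ] (1:H))) * EE j
        + TensorProduct.lift mul (w * ((1:H) ⊗ₜ[ℚ] EE j)) * EE i
        - TensorProduct.lift mul w * EE (i + j + 1) := by
  induction hw using Submodule.span_induction with
  | mem w h =>
    obtain ⟨k, l, rfl⟩ := h
    have hpi : eE (Nat.succPNat i) = EE i := (EE_eq_eE i).symm
    have hpj : eE (Nat.succPNat j) = EE j := (EE_eq_eE j).symm
    have hpij : eE (Nat.succPNat i + Nat.succPNat j) = EE (i + j + 1) := by
      rw [eE_eq_EE]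
      congr 1
      show i + 1 + (j + 1) - 1 = i + j + 1
      omega
    simp only [Algebra.TensorProduct.tmul_mul_tmul, mul_one, TensorProduct.lift.tmul]
    rw [← hpi, ← hpj, ← hpij, ← eIdx_concat k, ← eIdx_concat l]
    exact hRec k l _ _
  | zero => simp
  | add x y _ _ hx hy =>
    simp only [add_mul, map_add, hx, hy]
    abel
  | smul a x _ hx =>
    simp only [smul_mul_assoc, map_smul, hx, smul_add, smul_sub]

end Mul

section KeyStep

variable (mul : H →ₗ[ℚ] H →ₗ[ℚ] H)

lemma KeyStep
    (hRec : ∀ (k l : List ℕ+) (a b : ℕ+),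
      mul (eIdx (k ++ [a])) (eIdx (l ++ [b])) =
        mul (eIdx (k ++ [a])) (eIdx l) * eE b
        + mul (eIdx k) (eIdx (l ++ [b])) * eE a
        - mul (eIdx k) (eIdx l) * eE (a + b))
    (F G : PowerSeries H)
    (hF : ∀ n, PowerSeries.coeff (R := H) n F ∈ H1) (hG : ∀ n, PowerSeries.coeff (R := H) n G ∈ H1)
    (da db n : ℕ) :
    TensorProduct.lift mul (PowerSeries.coeff (R := HW) n (mL (F * A da) * mR (G * A db)))
      = (∑ p ∈ antidiagonal n, cc db p.2 •
          (TensorProduct.lift mul (PowerSeries.coeff (R := HW) p.1 (mL (F * A da) * mR G)) * EE (db + p.2)))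
        + (∑ p ∈ antidiagonal n, cc da p.2 •
          (TensorProduct.lift mul (PowerSeries.coeff (R := HW) p.1 (mL F * mR (G * A db))) * EE (da + p.2)))
        - (∑ p ∈ antidiagonal n, cc (da + db + 1) p.2 •
          (TensorProduct.lift mul (PowerSeries.coeff (R := HW) p.1 (mL F * mR G)) * EE (da + db + 1 + p.2))) := by
  have hWmem : ∀ s, PowerSeries.coeff (R := HW) s (mL F * mR G) ∈ PP := coeff_mLmR_mem hF hG
  have hassoc : mL (F * A da) * mR (G * A db) = (mL F * mR G) * (mL (A da) * mR (A db)) := by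
    rw [map_mul, map_mul]
    calc mL F * mL (A da) * (mR G * mR (A db))
        = mL F * (mL (A da) * mR G * mR (A db)) := by
          rw [mul_assoc, ← mul_assoc (mL (A da))]
      _ = mL F * (mR G * mL (A da) * mR (A db)) := by rw [LRcomm]
      _ = mL F * mR G * (mL (A da) * mR (A db)) := by noncomm_ring
  have hAA : ∀ s, PowerSeries.coeff (R := HW) s (mL (A da) * mR (A db))
      = ∑ q ∈ antidiagonal s, (cc da q.1 * cc db q.2) • (EE (da + q.1) ⊗ₜ[ℚ] EE (db + q.2)) := by
    intro s
    rw [coeff_mul]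
    refine Finset.sum_congr rfl fun q _ => ?_
    rw [coeff_mLA, coeff_mRA, smul_mul_smul_comm, Algebra.TensorProduct.tmul_mul_tmul,
      one_mul, mul_one]
  have h1 : ∀ m, PowerSeries.coeff (R := HW) m (mL (F * A da) * mR G)
      = ∑ q ∈ antidiagonal m, cc da q.2 •
          (PowerSeries.coeff (R := HW) q.1 (mL F * mR G) * (EE (da + q.2) ⊗ₜ[ℚ] (1:H))) := by
    intro m
    have h : mL (F * A da) * mR G = (mL F * mR G) * mL (A da) := by
      rw [map_mul, mul_assoc, LRcomm, ← mul_assoc]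
    rw [h, coeff_mul]
    refine Finset.sum_congr rfl fun q _ => ?_
    rw [coeff_mLA, mul_smul_comm]
  have h2 : ∀ m, PowerSeries.coeff (R := HW) m (mL F * mR (G * A db))
      = ∑ q ∈ antidiagonal m, cc db q.2 •
          (PowerSeries.coeff (R := HW) q.1 (mL F * mR G) * ((1:H) ⊗ₜ[ℚ] EE (db + q.2))) := by
    intro m
    have h : mL F * mR (G * A db) = (mL F * mR G) * mR (A db) := by
      rw [map_mul, ← mul_assoc]
    rw [h, coeff_mul]
    refine Finset.sum_congr rfl fun q _ => ?_
    rw [coeff_mRA, mul_smul_comm]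
  -- expand the left-hand side into a double sum and apply the recursion
  rw [hassoc, coeff_mul, map_sum]
  have hexp : ∀ p ∈ antidiagonal n,
      TensorProduct.lift mul (PowerSeries.coeff (R := HW) p.1 (mL F * mR G)
          * PowerSeries.coeff (R := HW) p.2 (mL (A da) * mR (A db)))
      = (∑ q ∈ antidiagonal p.2, (cc da q.1 * cc db q.2) •
            (TensorProduct.lift mul (PowerSeries.coeff (R := HW) p.1 (mL F * mR G)
              * (EE (da + q.1) ⊗ₜ[ℚ] (1:H))) * EE (db + q.2)))
        + (∑ q ∈ antidiagonal p.2, (cc da q.1 * cc db q.2) •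
            (TensorProduct.lift mul (PowerSeries.coeff (R := HW) p.1 (mL F * mR G)
              * ((1:H) ⊗ₜ[ℚ] EE (db + q.2))) * EE (da + q.1)))
        - (∑ q ∈ antidiagonal p.2, (cc da q.1 * cc db q.2) •
            (TensorProduct.lift mul (PowerSeries.coeff (R := HW) p.1 (mL F * mR G))
              * EE (da + q.1 + (db + q.2) + 1))) := by
    intro p _
    rw [hAA, Finset.mul_sum, map_sum, ← Finset.sum_add_distrib, ← Finset.sum_sub_distrib]
    refine Finset.sum_congr rfl fun q _ => ?_
    rw [mul_smul_comm, map_smul, recW mul hRec (hWmem p.1) (da + q.1) (db + q.2),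
      smul_sub, smul_add]
  rw [Finset.sum_congr rfl hexp, Finset.sum_sub_distrib, Finset.sum_add_distrib]
  -- match the three double sums
  have m1 : ∑ p ∈ antidiagonal n, ∑ q ∈ antidiagonal p.2, (cc da q.1 * cc db q.2) •
        (TensorProduct.lift mul (PowerSeries.coeff (R := HW) p.1 (mL F * mR G)
          * (EE (da + q.1) ⊗ₜ[ℚ] (1:H))) * EE (db + q.2))
      = ∑ p ∈ antidiagonal n, cc db p.2 •
          (TensorProduct.lift mul (PowerSeries.coeff (R := HW) p.1 (mL (F * A da) * mR G)) * EE (db + p.2)) := by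
    rw [L3 n (fun u i j => (cc da i * cc db j) •
        (TensorProduct.lift mul (PowerSeries.coeff (R := HW) u (mL F * mR G)
          * (EE (da + i) ⊗ₜ[ℚ] (1:H))) * EE (db + j)))]
    refine Finset.sum_congr rfl fun p _ => ?_
    rw [h1, map_sum, Finset.sum_mul, Finset.smul_sum]
    refine Finset.sum_congr rfl fun q _ => ?_
    rw [map_smul, smul_mul_assoc, smul_smul, mul_comm (cc db p.2)]
  have m2 : ∑ p ∈ antidiagonal n, ∑ q ∈ antidiagonal p.2, (cc da q.1 * cc db q.2) •
        (TensorProduct.lift mul (PowerSeries.coeff (R := HW) p.1 (mL F * mR G)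
          * ((1:H) ⊗ₜ[ℚ] EE (db + q.2))) * EE (da + q.1))
      = ∑ p ∈ antidiagonal n, cc da p.2 •
          (TensorProduct.lift mul (PowerSeries.coeff (R := HW) p.1 (mL F * mR (G * A db))) * EE (da + p.2)) := by
    have swap : ∀ p ∈ antidiagonal n, ∑ q ∈ antidiagonal p.2, (cc da q.1 * cc db q.2) •
          (TensorProduct.lift mul (PowerSeries.coeff (R := HW) p.1 (mL F * mR G)
            * ((1:H) ⊗ₜ[ℚ] EE (db + q.2))) * EE (da + q.1))
        = ∑ q ∈ antidiagonal p.2, (cc da q.2 * cc db q.1) •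
          (TensorProduct.lift mul (PowerSeries.coeff (R := HW) p.1 (mL F * mR G)
            * ((1:H) ⊗ₜ[ℚ] EE (db + q.1))) * EE (da + q.2)) := by
      intro p _
      exact sum_ad_swap p.2 (fun i j => (cc da i * cc db j) •
        (TensorProduct.lift mul (PowerSeries.coeff (R := HW) p.1 (mL F * mR G)
          * ((1:H) ⊗ₜ[ℚ] EE (db + j))) * EE (da + i)))
    rw [Finset.sum_congr rfl swap]
    rw [L3 n (fun u j i => (cc da i * cc db j) •
        (TensorProduct.lift mul (PowerSeries.coeff (R := HW) u (mL F * mR G)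
          * ((1:H) ⊗ₜ[ℚ] EE (db + j))) * EE (da + i)))]
    refine Finset.sum_congr rfl fun p _ => ?_
    rw [h2, map_sum, Finset.sum_mul, Finset.smul_sum]
    refine Finset.sum_congr rfl fun q _ => ?_
    rw [map_smul, smul_mul_assoc, smul_smul, mul_comm (cc da p.2)]
  have m3 : ∑ p ∈ antidiagonal n, ∑ q ∈ antidiagonal p.2, (cc da q.1 * cc db q.2) •
        (TensorProduct.lift mul (PowerSeries.coeff (R := HW) p.1 (mL F * mR G))
          * EE (da + q.1 + (db + q.2) + 1))
      = ∑ p ∈ antidiagonal n, cc (da + db + 1) p.2 •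
          (TensorProduct.lift mul (PowerSeries.coeff (R := HW) p.1 (mL F * mR G))
            * EE (da + db + 1 + p.2)) := by
    refine Finset.sum_congr rfl fun p hp => ?_
    have hq : ∀ q ∈ antidiagonal p.2, (cc da q.1 * cc db q.2) •
          (TensorProduct.lift mul (PowerSeries.coeff (R := HW) p.1 (mL F * mR G))
            * EE (da + q.1 + (db + q.2) + 1))
        = (cc da q.1 * cc db q.2) •
          (TensorProduct.lift mul (PowerSeries.coeff (R := HW) p.1 (mL F * mR G))
            * EE (da + db + 1 + p.2)) := by
      intro q hq
      rw [Finset.HasAntidiagonal.mem_antidiagonal] at hq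
      congr 3
      omega
    rw [Finset.sum_congr rfl hq, ← Finset.sum_smul, Cser_conv]
  rw [m1, m2, m3]

end KeyStep

section Key

variable (mul : H →ₗ[ℚ] H →ₗ[ℚ] H)

lemma KeyNilL (hOneL : ∀ l : List ℕ+, mul (eIdx []) (eIdx l) = eIdx l)
    (l : List ℕ+) (n : ℕ) :
    PowerSeries.coeff (R := H) n (sigmaT (mul (eIdx []) (eIdx l)))
      = TensorProduct.lift mul
          (PowerSeries.coeff (R := HW) n (mL (sigmaT (eIdx [])) * mR (sigmaT (eIdx l)))) := by
  rw [hOneL l]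
  have h1 : sigmaT (eIdx []) = 1 := by
    show sigmaT 1 = 1
    exact map_one _
  rw [h1, map_one, one_mul, coeff_mR, TensorProduct.lift.tmul]
  exact (honeL' mul hOneL (coeff_sigma_eIdx_mem l n)).symm

lemma KeyNilR (hOneR : ∀ k : List ℕ+, mul (eIdx k) (eIdx []) = eIdx k)
    (k : List ℕ+) (n : ℕ) :
    PowerSeries.coeff (R := H) n (sigmaT (mul (eIdx k) (eIdx [])))
      = TensorProduct.lift mul
          (PowerSeries.coeff (R := HW) n (mL (sigmaT (eIdx k)) * mR (sigmaT (eIdx [])))) := by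
  rw [hOneR k]
  have h1 : sigmaT (eIdx []) = 1 := by
    show sigmaT 1 = 1
    exact map_one _
  rw [h1, map_one, mul_one, coeff_mL, TensorProduct.lift.tmul]
  exact (honeR' mul hOneR (coeff_sigma_eIdx_mem k n)).symm

lemma Key (hOneL : ∀ l : List ℕ+, mul (eIdx []) (eIdx l) = eIdx l)
    (hOneR : ∀ k : List ℕ+, mul (eIdx k) (eIdx []) = eIdx k)
    (hRec : ∀ (k l : List ℕ+) (a b : ℕ+),
      mul (eIdx (k ++ [a])) (eIdx (l ++ [b])) =
        mul (eIdx (k ++ [a])) (eIdx l) * eE b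
        + mul (eIdx k) (eIdx (l ++ [b])) * eE a
        - mul (eIdx k) (eIdx l) * eE (a + b)) :
    ∀ (N : ℕ) (k l : List ℕ+), k.length + l.length ≤ N → ∀ n : ℕ,
      PowerSeries.coeff (R := H) n (sigmaT (mul (eIdx k) (eIdx l)))
        = TensorProduct.lift mul
            (PowerSeries.coeff (R := HW) n (mL (sigmaT (eIdx k)) * mR (sigmaT (eIdx l)))) := by
  intro N
  induction N with
  | zero =>
    intro k l hlen n
    have hk : k = [] := List.eq_nil_of_length_eq_zero (by omega)
    subst hk
    exact KeyNilL mul hOneL l n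
  | succ N ihN =>
    intro k l hlen n
    rcases List.eq_nil_or_concat k with rfl | ⟨k', a, hk⟩
    · exact KeyNilL mul hOneL l n
    rcases List.eq_nil_or_concat l with rfl | ⟨l', b, hl⟩
    · exact KeyNilR mul hOneR k n
    rw [List.concat_eq_append] at hk hl
    subst hk
    subst hl
    -- lengths
    simp only [List.length_append, List.length_singleton] at hlen
    have hll : (k' ++ [a]).length + l'.length ≤ N := by
      simp only [List.length_append, List.length_singleton]; omega
    have hlk : k'.length + (l' ++ [b]).length ≤ N := by
      simp only [List.length_append, List.length_singleton]; omega
    have hkl : k'.length + l'.length ≤ N := by omega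
    obtain ⟨da, hda⟩ : ∃ d, (a : ℕ) - 1 = d := ⟨_, rfl⟩
    obtain ⟨db, hdb⟩ : ∃ d, (b : ℕ) - 1 = d := ⟨_, rfl⟩
    have hFa : sigmaT (eIdx (k' ++ [a])) = sigmaT (eIdx k') * A da := by
      rw [eIdx_concat, map_mul, sigma_eE, hda]
    have hGb : sigmaT (eIdx (l' ++ [b])) = sigmaT (eIdx l') * A db := by
      rw [eIdx_concat, map_mul, sigma_eE, hdb]
    have hab : ((a + b : ℕ+) : ℕ) - 1 = da + db + 1 := by
      have h : ((a + b : ℕ+) : ℕ) = (a:ℕ) + (b:ℕ) := rfl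
      have ha : 0 < (a:ℕ) := a.property
      have hb : 0 < (b:ℕ) := b.property
      omega
    -- the three induction hypotheses
    have ih1 : ∀ m, PowerSeries.coeff (R := H) m (sigmaT (mul (eIdx (k' ++ [a])) (eIdx l')))
        = TensorProduct.lift mul (PowerSeries.coeff (R := HW) m
            (mL (sigmaT (eIdx k') * A da) * mR (sigmaT (eIdx l')))) := by
      intro m
      have := ihN (k' ++ [a]) l' hll m
      rwa [hFa] at this
    have ih2 : ∀ m, PowerSeries.coeff (R := H) m (sigmaT (mul (eIdx k') (eIdx (l' ++ [b]))))
        = TensorProduct.lift mul (PowerSeries.coeff (R := HW) m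
            (mL (sigmaT (eIdx k')) * mR (sigmaT (eIdx l') * A db))) := by
      intro m
      have := ihN k' (l' ++ [b]) hlk m
      rwa [hGb] at this
    have ih3 : ∀ m, PowerSeries.coeff (R := H) m (sigmaT (mul (eIdx k') (eIdx l')))
        = TensorProduct.lift mul (PowerSeries.coeff (R := HW) m
            (mL (sigmaT (eIdx k')) * mR (sigmaT (eIdx l')))) :=
      fun m => ihN k' l' hkl m
    -- coefficient expansion of a product with `A d`
    have hcoefA : ∀ (U : PowerSeries H) (d m : ℕ), PowerSeries.coeff (R := H) m (U * A d)
        = ∑ p ∈ antidiagonal m, cc d p.2 • (PowerSeries.coeff (R := H) p.1 U * EE (d + p.2)) := by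
      intro U d m
      rw [coeff_mul]
      exact Finset.sum_congr rfl fun p _ => by rw [A, coeff_mk, mul_smul_comm]
    -- expand the left-hand side
    have hLHS : PowerSeries.coeff (R := H) n (sigmaT (mul (eIdx (k' ++ [a])) (eIdx (l' ++ [b]))))
        = (∑ p ∈ antidiagonal n, cc db p.2 •
            (TensorProduct.lift mul (PowerSeries.coeff (R := HW) p.1
              (mL (sigmaT (eIdx k') * A da) * mR (sigmaT (eIdx l')))) * EE (db + p.2)))
          + (∑ p ∈ antidiagonal n, cc da p.2 •
            (TensorProduct.lift mul (PowerSeries.coeff (R := HW) p.1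
              (mL (sigmaT (eIdx k')) * mR (sigmaT (eIdx l') * A db))) * EE (da + p.2)))
          - (∑ p ∈ antidiagonal n, cc (da + db + 1) p.2 •
            (TensorProduct.lift mul (PowerSeries.coeff (R := HW) p.1
              (mL (sigmaT (eIdx k')) * mR (sigmaT (eIdx l')))) * EE (da + db + 1 + p.2))) := by
      rw [hRec k' l' a b, map_sub, map_add, map_mul, map_mul, map_mul,
        map_sub, map_add, sigma_eE a, sigma_eE b, sigma_eE (a + b), hda, hdb, hab,
        hcoefA, hcoefA, hcoefA]
      congr 1
      · congr 1
        · refine Finset.sum_congr rfl fun p _ => ?_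
          rw [ih1]
        · refine Finset.sum_congr rfl fun p _ => ?_
          rw [ih2]
      · refine Finset.sum_congr rfl fun p _ => ?_
        rw [ih3]
    rw [hLHS, hFa, hGb]
    exact (KeyStep mul hRec (sigmaT (eIdx k')) (sigmaT (eIdx l'))
      (coeff_sigma_eIdx_mem k') (coeff_sigma_eIdx_mem l') da db n).symm

end Key

theorem stmt_0
    (mul : H →ₗ[ℚ] H →ₗ[ℚ] H)
    (hOneL : ∀ l : List ℕ+, mul (eIdx []) (eIdx l) = eIdx l)
    (hOneR : ∀ k : List ℕ+, mul (eIdx k) (eIdx []) = eIdx k)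
    (hRec : ∀ (k l : List ℕ+) (a b : ℕ+),
      mul (eIdx (k ++ [a])) (eIdx (l ++ [b])) =
        mul (eIdx (k ++ [a])) (eIdx l) * eE b
        + mul (eIdx k) (eIdx (l ++ [b])) * eE a
        - mul (eIdx k) (eIdx l) * eE (a + b)) :
    (∀ u ∈ H1, ∀ n : ℕ, PowerSeries.coeff (R := H) n (sigmaT u) ∈ H1) ∧
    (∀ u ∈ H1, ∀ v ∈ H1, ∀ n : ℕ,
      PowerSeries.coeff (R := H) n (sigmaT (mul u v)) =
        ∑ p ∈ Finset.HasAntidiagonal.antidiagonal n,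
          mul (PowerSeries.coeff (R := H) p.1 (sigmaT u)) (PowerSeries.coeff (R := H) p.2 (sigmaT v))) := by
  constructor
  · intro u hu n
    induction hu using Submodule.span_induction with
    | mem x h =>
      obtain ⟨k, rfl⟩ := h
      exact coeff_sigma_eIdx_mem k n
    | zero => simp
    | add x y _ _ hx hy =>
      rw [map_add, map_add]
      exact add_mem hx hy
    | smul c x _ hx =>
      rw [map_smul, PowerSeries.coeff_smul]
      exact Submodule.smul_mem _ _ hx
  · intro u hu v hv n
    induction hu using Submodule.span_induction with
    | mem x h =>
      obtain ⟨k, rfl⟩ := h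
      induction hv using Submodule.span_induction with
      | mem y h' =>
        obtain ⟨l, rfl⟩ := h'
        have := Key mul hOneL hOneR hRec (k.length + l.length) k l le_rfl n
        rw [this, coeff_mul, map_sum]
        refine Finset.sum_congr rfl fun p _ => ?_
        rw [coeff_mL, coeff_mR, Algebra.TensorProduct.tmul_mul_tmul, one_mul, mul_one,
          TensorProduct.lift.tmul]
      | zero => simp
      | add y z _ _ hy hz =>
        simp only [map_add, hy, hz, ← Finset.sum_add_distrib]
      | smul c y _ hy =>
        simp only [map_smul, PowerSeries.coeff_smul, hy, Finset.smul_sum]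
    | zero => simp
    | add x y _ _ hx hy =>
      simp only [map_add, LinearMap.add_apply, hx, hy, ← Finset.sum_add_distrib]
    | smul c x _ hx =>
      simp only [map_smul, LinearMap.smul_apply, PowerSeries.coeff_smul, hx, Finset.smul_sum]
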